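/- Let S be an inverse semigroup with zero, K a field, and a ∈ K₀S a non-singular element with magic element t. If e and f are idempotents of S (or the adjoined identity 1) such that e t f ≠ 0, then e a f is non-singular and e t f is magic for e a f. -/
import Mathlib


/-- An inverse semigroup with zero. -/
class InverseSemigroup0 (S : Type*) extends Semigroup S, Zero S, Star S where
  zero_mul : ∀ s : S, 0 * s = 0
  mul_zero : ∀ s : S, s * 0 = 0
  mul_star_mul_self : ∀ s : S, s * star s * s = s
  star_mul_self_star : ∀ s : S, star s * s * star s = star s
  star_unique : ∀ s t : S, s * t * s = s → t * s * t = t → t = star s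

/-- The natural partial order on an inverse semigroup. -/
def NatLe {S : Type*} [InverseSemigroup0 S] (a b : S) : Prop := a = b * star a * a

namespace IS0
variable {S : Type*} [InverseSemigroup0 S]

lemma sms (s : S) : s * star s * s = s := InverseSemigroup0.mul_star_mul_self s
lemma sss (s : S) : star s * s * star s = star s := InverseSemigroup0.star_mul_self_star s

lemma star_idem {e : S} (he : IsIdempotentElem e) : star e = e := by
  have h : e * e * e = e := by rw [he.eq, he.eq]
  exact (InverseSemigroup0.star_unique e e h h).symm

lemma imm {e : S} (he : IsIdempotentElem e) (y : S) : e * (e * y) = e * y := by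
  rw [← mul_assoc, he.eq]

variable {e f : S}

lemma step1 (he : IsIdempotentElem e) (hf : IsIdempotentElem f) :
    f * star (e * f) * e = star (e * f) := by
  apply InverseSemigroup0.star_unique
  · calc (e * f) * (f * star (e * f) * e) * (e * f)
        = (e * f) * star (e * f) * (e * f) := by
          simp only [mul_assoc, imm he, imm hf, he.eq, hf.eq]
      _ = e * f := sms (e * f)
  · calc (f * star (e * f) * e) * (e * f) * (f * star (e * f) * e)
        = f * (star (e * f) * (e * f) * star (e * f)) * e := by
          simp only [mul_assoc, imm he, imm hf, he.eq, hf.eq]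
      _ = f * star (e * f) * e := by rw [sss (e * f), mul_assoc]

lemma step2 (he : IsIdempotentElem e) (hf : IsIdempotentElem f) :
    IsIdempotentElem (star (e * f)) := by
  unfold IsIdempotentElem
  conv_lhs => rw [← step1 he hf]
  calc (f * star (e * f) * e) * (f * star (e * f) * e)
      = f * (star (e * f) * (e * f) * star (e * f)) * e := by
        simp only [mul_assoc]
    _ = f * star (e * f) * e := by rw [sss (e * f), mul_assoc]
    _ = star (e * f) := step1 he hf

lemma step3 (he : IsIdempotentElem e) (hf : IsIdempotentElem f) :
    e * f = star (e * f) := by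
  have h := InverseSemigroup0.star_unique (star (e * f)) (e * f)
    (sss (e * f)) (sms (e * f))
  rw [star_idem (step2 he hf)] at h
  exact h

lemma idem_mul (he : IsIdempotentElem e) (hf : IsIdempotentElem f) :
    IsIdempotentElem (e * f) := by
  rw [step3 he hf]; exact step2 he hf

lemma idem_comm (he : IsIdempotentElem e) (hf : IsIdempotentElem f) :
    e * f = f * e := by
  have hef := idem_mul he hf
  have hfe := idem_mul hf he
  have h1 : (e * f) * (f * e) * (e * f) = e * f := by
    calc (e * f) * (f * e) * (e * f) = (e * f) * (e * f) := by
          simp only [mul_assoc, imm he, imm hf, he.eq, hf.eq]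
      _ = e * f := hef.eq
  have h2 : (f * e) * (e * f) * (f * e) = f * e := by
    calc (f * e) * (e * f) * (f * e) = (f * e) * (f * e) := by
          simp only [mul_assoc, imm he, imm hf, he.eq, hf.eq]
      _ = f * e := hfe.eq
  have := InverseSemigroup0.star_unique (e * f) (f * e) h1 h2
  rw [this, ← step3 he hf]

lemma star_mul (x y : S) : star (x * y) = star y * star x := by
  have hxx : IsIdempotentElem (star x * x) := by
    unfold IsIdempotentElem
    calc (star x * x) * (star x * x) = (star x * x * star x) * x := by
          simp only [mul_assoc]
      _ = star x * x := by rw [sss]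
  have hyy : IsIdempotentElem (y * star y) := by
    unfold IsIdempotentElem
    calc (y * star y) * (y * star y) = (y * star y * y) * star y := by
          simp only [mul_assoc]
      _ = y * star y := by rw [sms]
  have hcomm := idem_comm hxx hyy
  have h1 : (x * y) * (star y * star x) * (x * y) = x * y := by
    calc (x * y) * (star y * star x) * (x * y)
        = x * ((y * star y) * (star x * x)) * y := by simp only [mul_assoc]
      _ = x * ((star x * x) * (y * star y)) * y := by rw [← hcomm]
      _ = (x * star x * x) * (y * star y * y) := by simp only [mul_assoc]
      _ = x * y := by rw [sms, sms]
  have h2 : (star y * star x) * (x * y) * (star y * star x) = star y * star x := by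
    calc (star y * star x) * (x * y) * (star y * star x)
        = star y * ((star x * x) * (y * star y)) * star x := by simp only [mul_assoc]
      _ = star y * ((y * star y) * (star x * x)) * star x := by rw [hcomm]
      _ = (star y * y * star y) * (star x * x * star x) := by simp only [mul_assoc]
      _ = star y * star x := by rw [sss, sss]
  exact (InverseSemigroup0.star_unique (x * y) (star y * star x) h1 h2).symm

lemma star_star (s : S) : star (star s) = s :=
  (InverseSemigroup0.star_unique (star s) s (sss s) (sms s)).symm

lemma idem_uu (s : S) : IsIdempotentElem (star s * s) := by
  unfold IsIdempotentElem
  calc (star s * s) * (star s * s) = (star s * s * star s) * s := by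
        simp only [mul_assoc]
    _ = star s * s := by rw [sss]

lemma idem_ss (s : S) : IsIdempotentElem (s * star s) := by
  unfold IsIdempotentElem
  calc (s * star s) * (s * star s) = (s * star s * s) * star s := by
        simp only [mul_assoc]
    _ = s * star s := by rw [sms]

lemma natLe_star_eq {u v : S} (h : NatLe u v) :
    star u = star u * u * star v := by
  conv_lhs => rw [h]
  rw [star_mul, star_mul, star_star, ← mul_assoc]

lemma natLe_dual {u v : S} (h : NatLe u v) : u * star u * v = u := by
  have hs := natLe_star_eq h
  calc u * star u * v = u * (star u * u * star v) * v := by rw [← hs]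
    _ = (u * star u * u) * (star v * v) := by simp only [mul_assoc]
    _ = u * (star v * v) := by rw [sms]
    _ = (v * star u * u) * (star v * v) := by rw [← h]
    _ = v * ((star u * u) * (star v * v)) := by simp only [mul_assoc]
    _ = v * ((star v * v) * (star u * u)) := by rw [idem_comm (idem_uu u) (idem_uu v)]
    _ = (v * star v * v) * (star u * u) := by simp only [mul_assoc]
    _ = v * star u * u := by rw [sms, mul_assoc]
    _ = u := h.symm

lemma natLe_uu {u v : S} (h : NatLe u v) :
    star u * u = star u * u * (star v * v) := by
  have key : star v * u = star v * v * (star u * u) := by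
    conv_lhs => rw [h]
    simp only [mul_assoc]
  calc star u * u
      = (star u * u * star v) * u := by conv_lhs => rw [natLe_star_eq h]
    _ = (star u * u) * (star v * u) := by simp only [mul_assoc]
    _ = (star u * u) * (star v * v * (star u * u)) := by rw [key]
    _ = (star u * u) * ((star u * u) * (star v * v)) := by
        rw [idem_comm (idem_uu v) (idem_uu u)]
    _ = ((star u * u) * (star u * u)) * (star v * v) := by simp only [mul_assoc]
    _ = star u * u * (star v * v) := by rw [(idem_uu u).eq]

lemma natLe_trans {a b c : S} (h1 : NatLe a b) (h2 : NatLe b c) : NatLe a c := by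
  unfold NatLe
  calc a = b * star a * a := h1
    _ = (c * star b * b) * (star a * a) := by rw [← h2, mul_assoc]
    _ = c * ((star b * b) * (star a * a)) := by simp only [mul_assoc]
    _ = c * ((star a * a) * (star b * b)) := by rw [idem_comm (idem_uu b) (idem_uu a)]
    _ = c * (star a * a) := by rw [← natLe_uu h1]
    _ = c * star a * a := by simp only [mul_assoc]

lemma natLe_refl (s : S) : NatLe s s := (sms s).symm

lemma natLe_zero {u : S} (h : NatLe u 0) : u = 0 := by
  rw [h, InverseSemigroup0.zero_mul, InverseSemigroup0.zero_mul]


lemma natLe_idem_left {e : S} (he : IsIdempotentElem e) (s : S) : NatLe (e * s) s := by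
  unfold NatLe
  rw [star_mul, star_idem he]
  refine Eq.symm ?_
  calc s * (star s * e) * (e * s)
      = (s * star s) * (e * (e * s)) := by simp only [mul_assoc]
    _ = (s * star s) * (e * s) := by rw [imm he]
    _ = ((s * star s) * e) * s := by simp only [mul_assoc]
    _ = (e * (s * star s)) * s := by rw [idem_comm (idem_ss s) he]
    _ = e * (s * star s * s) := by simp only [mul_assoc]
    _ = e * s := by rw [sms]

lemma natLe_idem_right {f : S} (hf : IsIdempotentElem f) (s : S) : NatLe (s * f) s := by
  unfold NatLe
  rw [star_mul, star_idem hf]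
  refine Eq.symm ?_
  calc s * (f * star s) * (s * f)
      = s * (f * ((star s * s) * f)) := by simp only [mul_assoc]
    _ = s * (f * (f * (star s * s))) := by rw [idem_comm (idem_uu s) hf]
    _ = s * (f * (star s * s)) := by rw [imm hf]
    _ = s * ((star s * s) * f) := by rw [idem_comm hf (idem_uu s)]
    _ = (s * star s * s) * f := by simp only [mul_assoc]
    _ = s * f := by rw [sms]

lemma absorb_left {u e w : S} (he : IsIdempotentElem e) (h : NatLe u (e * w)) :
    e * u = u := by
  conv_lhs => rw [h]
  conv_rhs => rw [h]
  simp only [mul_assoc, imm he]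

lemma absorb_right {u f w : S} (hf : IsIdempotentElem f) (h : NatLe u (w * f)) :
    u * f = u := by
  have hd := natLe_dual h
  conv_lhs => rw [← hd]
  conv_rhs => rw [← hd]
  simp only [mul_assoc, hf.eq]

lemma natLe_mul_left {u s e : S} (hu : e * u = u) (h : NatLe u s) :
    NatLe u (e * s) := by
  unfold NatLe
  calc u = e * u := hu.symm
    _ = e * (s * star u * u) := by rw [← h]
    _ = (e * s) * star u * u := by simp only [mul_assoc]

lemma natLe_mul_right {u s f : S} (hf : IsIdempotentElem f) (hu : u * f = u)
    (h : NatLe u s) : NatLe u (s * f) := by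
  have hstar : star u = f * star u := by
    conv_lhs => rw [← hu, star_mul, star_idem hf]
  unfold NatLe
  calc u = s * star u * u := h
    _ = s * (f * star u) * u := by rw [← hstar]
    _ = (s * f) * star u * u := by simp only [mul_assoc]

end IS0


variable (K S : Type*) [CommRing K] [InverseSemigroup0 S]

/-- The ring congruence on the semigroup algebra identifying the zero of `S`
with the zero of the algebra. -/
noncomputable def contractedCon : RingCon (MonoidAlgebra K S) :=
  ringConGen (fun a b => a = MonoidAlgebra.single (0 : S) (1 : K) ∧ b = 0)

/-- The contracted semigroup algebra `K₀S`: the `K`-algebra with basis `S \ {0}`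
and multiplication extending that of `S`, realized as the quotient of the semigroup
algebra of `S` by the span of the zero of `S`. -/
abbrev Kzero := (contractedCon K S).Quotient

/-- The quotient map onto the contracted semigroup algebra. -/
noncomputable def mk0 (a : MonoidAlgebra K S) : Kzero K S :=
  (a : (contractedCon K S).Quotient)

/-- The canonical map `S → K₀S`. -/
noncomputable def iota (s : S) : Kzero K S := mk0 K S (MonoidAlgebra.single s 1)

/-- An element of `K₀S` is singular if for every non-zero idempotent `e` there is a
non-zero idempotent `f ≤ e` with `a f = 0`. -/
noncomputable def Singular (x : Kzero K S) : Prop :=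
  ∀ e : S, IsIdempotentElem e → e ≠ 0 →
    ∃ f : S, IsIdempotentElem f ∧ f ≠ 0 ∧ NatLe f e ∧ x * iota K S f = 0

/-- `J` is a two-sided ideal of the (non-unital) ring `K₀S`. -/
def IsIdealSet (J : Set (Kzero K S)) : Prop :=
  (0 : Kzero K S) ∈ J ∧ (∀ a ∈ J, ∀ b ∈ J, a + b ∈ J) ∧ (∀ a ∈ J, -a ∈ J) ∧
    ∀ a ∈ J, ∀ x : Kzero K S, x * a ∈ J ∧ a * x ∈ J

open Classical in
/-- `t` is a magic element for the non-singular element with coefficient function `b`: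
`t ≠ 0` and for all non-zero `u ≤ t` the sum `Σ_{s ≥ u} b_s` is non-zero. -/
noncomputable def Magic {K S : Type*} [CommRing K] [InverseSemigroup0 S]
    (b : S →₀ K) (t : S) : Prop :=
  t ≠ 0 ∧ ∀ u : S, u ≠ 0 → NatLe u t →
    (∑ s ∈ b.support.filter fun s => NatLe u s, b s) ≠ 0

/-- Multiplication on the left by an element of `S` or by the adjoined identity
(encoded by `none`). -/
def lOpt {S : Type*} [InverseSemigroup0 S] : Option S → S → S
  | none, s => s
  | some x, s => x * s

/-- Multiplication on the right by an element of `S` or by the adjoined identity. -/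
def rOpt {S : Type*} [InverseSemigroup0 S] : S → Option S → S
  | s, none => s
  | s, some y => s * y

/-- The product `e s f` in `S` with an adjoined identity. -/
def conjOpt {S : Type*} [InverseSemigroup0 S] (e : Option S) (s : S) (f : Option S) : S :=
  rOpt (lOpt e s) f

/-- The coefficient function of `e a f` in `K₀S`, where `a` has coefficient
function `b`. -/
noncomputable def conjCoeff {K S : Type*} [CommRing K] [InverseSemigroup0 S]
    (e : Option S) (b : S →₀ K) (f : Option S) : S →₀ K :=
  Finsupp.erase 0 (b.sum fun s c => Finsupp.single (conjOpt e s f) c)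


namespace IS0
variable {S : Type*} [InverseSemigroup0 S]

lemma conjOpt_natLe {e f : Option S}
    (he : ∀ x ∈ e, IsIdempotentElem x) (hf : ∀ x ∈ f, IsIdempotentElem x)
    (s : S) : NatLe (conjOpt e s f) s := by
  cases e with
  | none =>
    cases f with
    | none => exact natLe_refl s
    | some y => exact natLe_idem_right (hf y rfl) s
  | some x =>
    cases f with
    | none => exact natLe_idem_left (he x rfl) s
    | some y =>
      exact natLe_trans (natLe_idem_right (hf y rfl) (x * s)) (natLe_idem_left (he x rfl) s)

lemma conjOpt_absorb_left {e f : Option S} {u t : S}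
    (he : ∀ x ∈ e, IsIdempotentElem x)
    (h : NatLe u (conjOpt e t f)) : lOpt e u = u := by
  cases e with
  | none => rfl
  | some x =>
    cases f with
    | none => exact absorb_left (he x rfl) h
    | some y =>
      have h' : NatLe u (x * t * y) := h
      exact absorb_left (he x rfl) ((mul_assoc x t y) ▸ h')

lemma conjOpt_absorb_right {e f : Option S} {u t : S}
    (hf : ∀ x ∈ f, IsIdempotentElem x)
    (h : NatLe u (conjOpt e t f)) : rOpt u f = u := by
  cases f with
  | none => rfl
  | some y => exact absorb_right (hf y rfl) h

lemma natLe_conjOpt {e f : Option S} {u s : S}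
    (hf : ∀ x ∈ f, IsIdempotentElem x)
    (hl : lOpt e u = u) (hr : rOpt u f = u) (h : NatLe u s) :
    NatLe u (conjOpt e s f) := by
  have h1 : NatLe u (lOpt e s) := by
    cases e with
    | none => exact h
    | some x => exact natLe_mul_left hl h
  cases f with
  | none => exact h1
  | some y => exact natLe_mul_right (hf y rfl) hr h1

end IS0

/-- If `a ∈ K₀S` is non-singular with magic element `t`, and `e, f` are idempotents of
`S` or the adjoined identity such that `e t f ≠ 0`, then `e a f` is non-singular with
magic element `e t f`. -/
theorem stmt11 {K S : Type*} [Field K] [InverseSemigroup0 S]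
    (b : S →₀ K) (hb0 : b 0 = 0) (t : S) (hmagic : Magic b t)
    (e f : Option S)
    (he : ∀ x ∈ e, IsIdempotentElem x) (hf : ∀ x ∈ f, IsIdempotentElem x)
    (hetf : conjOpt e t f ≠ 0) :
    Magic (conjCoeff e b f) (conjOpt e t f) := by
  classical
  obtain ⟨ht, hmag⟩ := hmagic
  refine ⟨hetf, ?_⟩
  intro u hu hle
  have hut : NatLe u t := IS0.natLe_trans hle (IS0.conjOpt_natLe he hf t)
  have hiff : ∀ s : S, NatLe u (conjOpt e s f) ↔ NatLe u s := fun s =>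
    ⟨fun h' => IS0.natLe_trans h' (IS0.conjOpt_natLe he hf s),
     fun h' => IS0.natLe_conjOpt hf (IS0.conjOpt_absorb_left he hle)
       (IS0.conjOpt_absorb_right hf hle) h'⟩
  have hnz : ∀ s : S, NatLe u s → s ≠ 0 := fun s h' h0 => hu (IS0.natLe_zero (h0 ▸ h'))
  set d := b.sum (fun s c => Finsupp.single (conjOpt e s f) c) with hd
  have hce : conjCoeff e b f = Finsupp.erase 0 d := rfl
  have hsupp : (conjCoeff e b f).support.filter (fun s => NatLe u s)
      = d.support.filter (fun s => NatLe u s) := by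
    rw [hce, Finsupp.support_erase]
    ext x
    simp only [Finset.mem_filter, Finset.mem_erase]
    constructor
    · rintro ⟨⟨-, hx⟩, hx2⟩; exact ⟨hx, hx2⟩
    · rintro ⟨hx, hx2⟩; exact ⟨⟨hnz x hx2, hx⟩, hx2⟩
  have hval : ∀ x ∈ d.support.filter (fun s => NatLe u s), conjCoeff e b f x = d x := by
    intro x hx
    rw [hce]
    exact Finsupp.erase_ne (hnz x (Finset.mem_filter.mp hx).2)
  rw [hsupp, Finset.sum_congr rfl hval]
  have hsum : ∑ x ∈ d.support.filter (fun s => NatLe u s), d x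
      = ∑ s ∈ b.support.filter (fun s => NatLe u s), b s := by
    rw [Finset.sum_filter]
    have h1 : ∑ x ∈ d.support, (if NatLe u x then d x else 0)
        = d.sum (fun x k => if NatLe u x then k else 0) := rfl
    rw [h1, hd, Finsupp.sum_sum_index (fun i => by simp) (fun i k l => by split <;> simp)]
    rw [Finsupp.sum, Finset.sum_filter]
    apply Finset.sum_congr rfl
    intro s hs
    rw [Finsupp.sum_single_index (by simp)]
    simp only [hiff s]
  rw [hsum]
  exact hmag u hu hut
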